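/- Let m > n. For every pair (A,B) of m×n complex matrices and every ε > 0, there exist m×n complex matrices (A',B') with |A_{ij} − A'_{ij}| < ε and |B_{ij} − B'_{ij}| < ε for all i,j, such that the pair (A',B') is equivalent to the pair ([Iₙ 0]ᵀ, [0 Iₙ]ᵀ), where [Iₙ 0]ᵀ is the m×n matrix whose first n rows form the identity Iₙ and whose remaining rows are zero, and [0 Iₙ]ᵀ is the m×n matrix whose last n rows form the identity Iₙ and whose first m−n rows are zero. -/

import Mathlib

open Matrix

noncomputable section

/-- The `M × N` complex matrix obtained by placing the matrix `A` with its top-left corner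
at (1-based) position `(ri+1, ci+1)` (i.e. with row offset `ri` and column offset `ci`),
with all other entries zero.  Block-diagonal direct sums of (possibly rectangular) matrices
are expressed as sums of such placements along the diagonal. -/
def place {M N m n : ℕ} (ri ci : ℕ) (A : Matrix (Fin m) (Fin n) ℂ) :
    Matrix (Fin M) (Fin N) ℂ := fun i j =>
  if hi : ri ≤ (i : ℕ) ∧ (i : ℕ) < ri + m then
    if hj : ci ≤ (j : ℕ) ∧ (j : ℕ) < ci + n then
      A ⟨(i : ℕ) - ri, by omega⟩ ⟨(j : ℕ) - ci, by omega⟩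
    else 0
  else 0

/-- The `r × (r-1)` matrix `F_r` with ones on the main diagonal and zeros elsewhere. -/
def MatF (r : ℕ) : Matrix (Fin r) (Fin (r - 1)) ℂ :=
  fun i j => if (i : ℕ) = (j : ℕ) then 1 else 0

/-- The `r × (r-1)` matrix `K_r` with ones on the subdiagonal and zeros elsewhere. -/
def MatK (r : ℕ) : Matrix (Fin r) (Fin (r - 1)) ℂ :=
  fun i j => if (i : ℕ) = (j : ℕ) + 1 then 1 else 0

/-- The matrix unit `E_{a,b}` (1-based indices): entry `(a,b)` is `1`, all others `0`. -/
def Estd {M N : ℕ} (a b : ℕ) : Matrix (Fin M) (Fin N) ℂ :=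
  fun i j => if (i : ℕ) + 1 = a ∧ (j : ℕ) + 1 = b then 1 else 0

/-- Two pairs `(A₁, A₂)` and `(B₁, B₂)` of `m × n` complex matrices are equivalent if
`B₁ = R * A₁ * S` and `B₂ = R * A₂ * S` for some invertible `R`, `S`. -/
def PairEquiv {m n : ℕ} (A₁ A₂ B₁ B₂ : Matrix (Fin m) (Fin n) ℂ) : Prop :=
  ∃ (R : Matrix (Fin m) (Fin m) ℂ) (S : Matrix (Fin n) (Fin n) ℂ),
    IsUnit R ∧ IsUnit S ∧ B₁ = R * A₁ * S ∧ B₂ = R * A₂ * S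

namespace PencilAux

/-- inclusion matrix: 1 at (r+p, p). -/
def inc (M a r : ℕ) : Matrix (Fin M) (Fin a) ℂ :=
  fun i p => if (i : ℕ) = r + (p : ℕ) then 1 else 0

lemma place_eq {M N a b : ℕ} (r c : ℕ) (A : Matrix (Fin a) (Fin b) ℂ) :
    (place r c A : Matrix (Fin M) (Fin N) ℂ) = inc M a r * A * (inc N b c)ᵀ := by
  funext i j
  simp only [Matrix.mul_apply, Matrix.transpose_apply, place, inc]
  by_cases hi : r ≤ (i : ℕ) ∧ (i : ℕ) < r + a
  · by_cases hj : c ≤ (j : ℕ) ∧ (j : ℕ) < c + b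
    · rw [dif_pos hi, dif_pos hj]
      rw [Finset.sum_eq_single (⟨(j : ℕ) - c, by omega⟩ : Fin b)]
      · rw [Finset.sum_eq_single (⟨(i : ℕ) - r, by omega⟩ : Fin a)]
        · rw [if_pos (show (i : ℕ) = r + ((⟨(i : ℕ) - r, by omega⟩ : Fin a) : ℕ) by
            simp only; omega)]
          rw [if_pos (show (j : ℕ) = c + ((⟨(j : ℕ) - c, by omega⟩ : Fin b) : ℕ) by
            simp only; omega)]
          ring
        · intro p _ hp
          rw [if_neg, zero_mul]
          intro h
          exact hp (Fin.ext (by simp only; omega))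
        · intro h; exact absurd (Finset.mem_univ _) h
      · intro q _ hq
        rw [if_neg, mul_zero]
        intro h
        exact hq (Fin.ext (by simp only; omega))
      · intro h; exact absurd (Finset.mem_univ _) h
    · rw [dif_pos hi, dif_neg hj]
      symm
      apply Finset.sum_eq_zero
      intro q _
      have := q.isLt
      rw [if_neg (by omega), mul_zero]
  · rw [dif_neg hi]
    symm
    apply Finset.sum_eq_zero
    intro q _
    rw [Finset.sum_eq_zero, zero_mul]
    intro p _
    have := p.isLt
    rw [if_neg (by omega), zero_mul]

lemma incT_mul_inc_same {M a : ℕ} (r : ℕ) (h : r + a ≤ M) :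
    (inc M a r)ᵀ * inc M a r = 1 := by
  funext p q
  simp only [Matrix.mul_apply, Matrix.transpose_apply, inc, Matrix.one_apply]
  rw [Finset.sum_eq_single (⟨r + (p : ℕ), by omega⟩ : Fin M)]
  · have hval : ((⟨r + (p : ℕ), by omega⟩ : Fin M) : ℕ) = r + (p : ℕ) := rfl
    by_cases hpq : p = q
    · subst hpq
      simp [hval]
    · have hvq : (p : ℕ) ≠ (q : ℕ) := fun hh => hpq (Fin.ext hh)
      rw [if_neg (show ¬ ((⟨r + (p : ℕ), by omega⟩ : Fin M) : ℕ) = r + (q : ℕ) by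
        rw [hval]; omega), mul_zero, if_neg hpq]
  · intro k _ hk
    rw [if_neg, zero_mul]
    intro hh
    exact hk (Fin.ext (by simp only; omega))
  · intro h; exact absurd (Finset.mem_univ _) h

lemma incT_mul_inc_disjoint {M a b : ℕ} (r s : ℕ) (h : r + a ≤ s ∨ s + b ≤ r) :
    (inc M a r)ᵀ * inc M b s = 0 := by
  funext p q
  simp only [Matrix.mul_apply, Matrix.transpose_apply, inc, Matrix.zero_apply]
  apply Finset.sum_eq_zero
  intro k _
  have hp := p.isLt
  have hq := q.isLt
  by_cases h1 : (k : ℕ) = r + (p : ℕ)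
  · rw [if_neg (show ¬ (k : ℕ) = s + (q : ℕ) by omega), mul_zero]
  · rw [if_neg h1, zero_mul]

lemma inc_mul_inc {M K a : ℕ} (r s : ℕ) (h : s + a ≤ K) :
    inc M K r * inc K a s = inc M a (r + s) := by
  funext i p
  simp only [Matrix.mul_apply, inc]
  rw [Finset.sum_eq_single (⟨s + (p : ℕ), by omega⟩ : Fin K)]
  · have hval : ((⟨s + (p : ℕ), by omega⟩ : Fin K) : ℕ) = s + (p : ℕ) := rfl
    by_cases hi : (i : ℕ) = r + s + (p : ℕ)
    · rw [if_pos (show ((⟨s + (p : ℕ), by omega⟩ : Fin K) : ℕ) = s + (p : ℕ) from rfl),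
        if_pos (show (i : ℕ) = r + ((⟨s + (p : ℕ), by omega⟩ : Fin K) : ℕ) by rw [hval]; omega),
        if_pos (by omega)]
      ring
    · rw [if_neg (by omega), zero_mul, if_neg hi]
  · intro k _ hk
    rw [if_neg (show ¬ ((k : ℕ) = s + (p : ℕ)) from fun hh => hk (Fin.ext (hh.trans rfl))), mul_zero]
  · intro h; exact absurd (Finset.mem_univ _) h

lemma inc_self {M : ℕ} : inc M M 0 = 1 := by
  funext i p
  simp only [inc, Matrix.one_apply]
  by_cases h : i = p
  · subst h; rw [if_pos (by omega), if_pos rfl]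
  · rw [if_neg, if_neg h]
    intro hh
    exact h (Fin.ext (by omega))

/-- aligned product of placements -/
lemma place_mul_place {M K N a b c : ℕ} (r s t : ℕ) (h : s + b ≤ K)
    (A : Matrix (Fin a) (Fin b) ℂ) (B : Matrix (Fin b) (Fin c) ℂ) :
    (place r s A : Matrix (Fin M) (Fin K) ℂ) * (place s t B : Matrix (Fin K) (Fin N) ℂ)
      = place r t (A * B) := by
  rw [place_eq, place_eq, place_eq]
  rw [show inc M a r * A * (inc K b s)ᵀ * (inc K b s * B * (inc N c t)ᵀ)
      = inc M a r * A * ((inc K b s)ᵀ * inc K b s) * B * (inc N c t)ᵀ by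
    simp only [Matrix.mul_assoc]]
  rw [incT_mul_inc_same s h, Matrix.mul_one]
  simp only [Matrix.mul_assoc]

/-- disjoint product of placements -/
lemma place_mul_place_disjoint {M K N a b b' c : ℕ} (r s s' t : ℕ)
    (h : s + b ≤ s' ∨ s' + b' ≤ s)
    (A : Matrix (Fin a) (Fin b) ℂ) (B : Matrix (Fin b') (Fin c) ℂ) :
    (place r s A : Matrix (Fin M) (Fin K) ℂ) * (place s' t B : Matrix (Fin K) (Fin N) ℂ)
      = 0 := by
  rw [place_eq, place_eq]
  rw [show inc M a r * A * (inc K b s)ᵀ * (inc K b' s' * B * (inc N c t)ᵀ)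
      = inc M a r * A * ((inc K b s)ᵀ * inc K b' s') * B * (inc N c t)ᵀ by
    simp only [Matrix.mul_assoc]]
  rw [incT_mul_inc_disjoint s s' h]
  simp

lemma place_full {M N : ℕ} (A : Matrix (Fin M) (Fin N) ℂ) : place 0 0 A = A := by
  rw [place_eq, inc_self, inc_self, Matrix.transpose_one, Matrix.one_mul, Matrix.mul_one]

lemma place_add {M N a b : ℕ} (r c : ℕ) (A B : Matrix (Fin a) (Fin b) ℂ) :
    (place r c (A + B) : Matrix (Fin M) (Fin N) ℂ) = place r c A + place r c B := by
  rw [place_eq, place_eq, place_eq, Matrix.mul_add, Matrix.add_mul]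

lemma place_sub {M N a b : ℕ} (r c : ℕ) (A B : Matrix (Fin a) (Fin b) ℂ) :
    (place r c (A - B) : Matrix (Fin M) (Fin N) ℂ) = place r c A - place r c B := by
  rw [place_eq, place_eq, place_eq, Matrix.mul_sub, Matrix.sub_mul]

lemma place_zero {M N a b : ℕ} (r c : ℕ) :
    (place r c (0 : Matrix (Fin a) (Fin b) ℂ) : Matrix (Fin M) (Fin N) ℂ) = 0 := by
  rw [place_eq, Matrix.mul_zero, Matrix.zero_mul]

lemma place_smul {M N a b : ℕ} (r c : ℕ) (t : ℂ) (A : Matrix (Fin a) (Fin b) ℂ) :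
    (place r c (t • A) : Matrix (Fin M) (Fin N) ℂ) = t • place r c A := by
  rw [place_eq, place_eq, Matrix.mul_smul, Matrix.smul_mul]

/-- nesting of placements -/
lemma place_place {M N K L a b : ℕ} (r c r' c' : ℕ) (h1 : r' + a ≤ K) (h2 : c' + b ≤ L)
    (A : Matrix (Fin a) (Fin b) ℂ) :
    (place r c (place r' c' A : Matrix (Fin K) (Fin L) ℂ) : Matrix (Fin M) (Fin N) ℂ)
      = place (r + r') (c + c') A := by
  rw [place_eq (M := K) (N := L), place_eq, place_eq]
  rw [show inc M K r * (inc K a r' * A * (inc L b c')ᵀ) * (inc N L c)ᵀ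
      = (inc M K r * inc K a r') * A * (inc N L c * inc L b c')ᵀ by
    rw [Matrix.transpose_mul]
    simp only [Matrix.mul_assoc]]
  rw [inc_mul_inc r r' h1, inc_mul_inc c c' h2]

/-- multiplication by a full-width row-placed matrix -/
lemma place_row_mul {M K N a : ℕ} (r : ℕ) (A : Matrix (Fin a) (Fin K) ℂ)
    (B : Matrix (Fin K) (Fin N) ℂ) :
    (place r 0 A : Matrix (Fin M) (Fin K) ℂ) * B = place r 0 (A * B) := by
  rw [place_eq, place_eq]
  simp only [inc_self, Matrix.transpose_one, Matrix.mul_one, Matrix.mul_assoc]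

lemma mul_place_col {M K N b : ℕ} (c : ℕ) (A : Matrix (Fin M) (Fin K) ℂ)
    (B : Matrix (Fin K) (Fin b) ℂ) :
    A * (place 0 c B : Matrix (Fin K) (Fin N) ℂ) = place 0 c (A * B) := by
  rw [place_eq, place_eq]
  simp only [inc_self, Matrix.one_mul, Matrix.mul_assoc]

/-- block extraction -/
def ext {M N : ℕ} (r c a b : ℕ) (A : Matrix (Fin M) (Fin N) ℂ) : Matrix (Fin a) (Fin b) ℂ :=
  (inc M a r)ᵀ * A * inc N b c

lemma ext_add {M N a b : ℕ} (r c : ℕ) (A B : Matrix (Fin M) (Fin N) ℂ) :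
    ext r c a b (A + B) = ext r c a b A + ext r c a b B := by
  unfold ext; rw [Matrix.mul_add, Matrix.add_mul]

lemma ext_smul {M N a b : ℕ} (r c : ℕ) (t : ℂ) (A : Matrix (Fin M) (Fin N) ℂ) :
    ext r c a b (t • A) = t • ext r c a b A := by
  unfold ext; rw [Matrix.mul_smul, Matrix.smul_mul]

lemma ext_place_same {M N a b : ℕ} (r c : ℕ) (h1 : r + a ≤ M) (h2 : c + b ≤ N)
    (A : Matrix (Fin a) (Fin b) ℂ) :
    ext r c a b (place r c A : Matrix (Fin M) (Fin N) ℂ) = A := by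
  unfold ext
  rw [place_eq]
  rw [show (inc M a r)ᵀ * (inc M a r * A * (inc N b c)ᵀ) * inc N b c
      = ((inc M a r)ᵀ * inc M a r) * A * ((inc N b c)ᵀ * inc N b c) by
    simp only [Matrix.mul_assoc]]
  rw [incT_mul_inc_same r h1, incT_mul_inc_same c h2, Matrix.one_mul, Matrix.mul_one]

lemma ext_place_row_disjoint {M N a b a' b' : ℕ} (r c r' c' : ℕ)
    (h : r + a ≤ r' ∨ r' + a' ≤ r)
    (A : Matrix (Fin a') (Fin b') ℂ) :
    ext r c a b (place r' c' A : Matrix (Fin M) (Fin N) ℂ) = 0 := by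
  unfold ext
  rw [place_eq]
  rw [show (inc M a r)ᵀ * (inc M a' r' * A * (inc N b' c')ᵀ) * inc N b c
      = ((inc M a r)ᵀ * inc M a' r') * (A * (inc N b' c')ᵀ * inc N b c) by
    simp only [Matrix.mul_assoc]]
  rw [incT_mul_inc_disjoint r r' h, Matrix.zero_mul]

lemma ext_place_col_disjoint {M N a b a' b' : ℕ} (r c r' c' : ℕ)
    (h : c + b ≤ c' ∨ c' + b' ≤ c)
    (A : Matrix (Fin a') (Fin b') ℂ) :
    ext r c a b (place r' c' A : Matrix (Fin M) (Fin N) ℂ) = 0 := by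
  unfold ext
  rw [place_eq]
  rw [show (inc M a r)ᵀ * (inc M a' r' * A * (inc N b' c')ᵀ) * inc N b c
      = ((inc M a r)ᵀ * inc M a' r') * A * ((inc N b' c')ᵀ * inc N b c) by
    simp only [Matrix.mul_assoc]]
  rw [incT_mul_inc_disjoint c' c (by omega), Matrix.mul_zero]

lemma proj_apply {M a : ℕ} (r : ℕ) (i j : Fin M) :
    (inc M a r * (inc M a r)ᵀ) i j
      = if (i = j ∧ r ≤ (i:ℕ) ∧ (i:ℕ) < r + a) then 1 else 0 := by
  rw [Matrix.mul_apply]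
  simp only [inc, Matrix.transpose_apply]
  by_cases hr : r ≤ (i:ℕ) ∧ (i:ℕ) < r + a
  · rw [Finset.sum_eq_single (⟨(i:ℕ) - r, by omega⟩ : Fin a)]
    · have hval : ((⟨(i:ℕ) - r, by omega⟩ : Fin a) : ℕ) = (i:ℕ) - r := rfl
      by_cases hij : i = j
      · subst hij
        rw [if_pos (by rw [hval]; omega), if_pos ⟨rfl, hr⟩]
        norm_num
      · have hv : (i:ℕ) ≠ (j:ℕ) := fun hh => hij (Fin.ext hh)
        rw [if_neg (show ¬ (j:ℕ) = r + ((⟨(i:ℕ) - r, by omega⟩ : Fin a) : ℕ) by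
          rw [hval]; omega), mul_zero,
          if_neg (by rintro ⟨h1, _⟩; exact hij h1)]
    · intro p _ hp
      rw [if_neg (show ¬ (i:ℕ) = r + (p:ℕ) from
        fun hh => hp (Fin.ext (show (p:ℕ) = (i:ℕ) - r by omega))), zero_mul]
    · intro h; exact absurd (Finset.mem_univ _) h
  · rw [if_neg (by rintro ⟨_, h2⟩; exact hr h2)]
    apply Finset.sum_eq_zero
    intro p _
    have := p.isLt
    rw [if_neg (by omega), zero_mul]

lemma place_one_proj {M a : ℕ} (r : ℕ) :
    (place r r (1 : Matrix (Fin a) (Fin a) ℂ) : Matrix (Fin M) (Fin M) ℂ)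
      = inc M a r * (inc M a r)ᵀ := by
  rw [place_eq, Matrix.mul_one]

lemma one_split {M a b : ℕ} (h : a + b = M) :
    (1 : Matrix (Fin M) (Fin M) ℂ)
      = place 0 0 (1 : Matrix (Fin a) (Fin a) ℂ) + place a a (1 : Matrix (Fin b) (Fin b) ℂ) := by
  funext i j
  have hi := i.isLt
  rw [Matrix.add_apply, place_one_proj, place_one_proj, proj_apply, proj_apply,
    Matrix.one_apply]
  by_cases hij : i = j
  · subst hij
    by_cases h1 : (i:ℕ) < a
    · rw [if_pos rfl, if_pos ⟨rfl, by omega, by omega⟩, if_neg (by rintro ⟨_, h2, _⟩; omega)]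
      norm_num
    · rw [if_pos rfl, if_neg (by rintro ⟨_, _, h2⟩; omega), if_pos ⟨rfl, by omega, by omega⟩]
      norm_num
  · rw [if_neg hij, if_neg (by rintro ⟨h1, _⟩; exact hij h1),
      if_neg (by rintro ⟨h1, _⟩; exact hij h1)]
    norm_num

lemma one_split3 {M a b c : ℕ} (h : a + b + c = M) :
    (1 : Matrix (Fin M) (Fin M) ℂ)
      = place 0 0 (1 : Matrix (Fin a) (Fin a) ℂ)
        + place a a (1 : Matrix (Fin b) (Fin b) ℂ)
        + place (a + b) (a + b) (1 : Matrix (Fin c) (Fin c) ℂ) := by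
  rw [one_split (a := a) (b := b + c) (by omega)]
  rw [show (place a a (1 : Matrix (Fin (b+c)) (Fin (b+c)) ℂ) : Matrix (Fin M) (Fin M) ℂ)
      = place a a (place 0 0 (1 : Matrix (Fin b) (Fin b) ℂ)
          + place b b (1 : Matrix (Fin c) (Fin c) ℂ)) by
    rw [← one_split rfl]]
  rw [place_add, place_place a a 0 0 (by omega) (by omega),
    place_place a a b b (by omega) (by omega), add_assoc]
  norm_num

lemma row_split {M N a b : ℕ} (h : a + b = M) (A : Matrix (Fin M) (Fin N) ℂ) :
    A = place 0 0 (ext 0 0 a N A) + place a 0 (ext a 0 b N A) := by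
  unfold ext
  rw [place_eq, place_eq, inc_self]
  rw [Matrix.transpose_one, Matrix.mul_one, Matrix.mul_one, Matrix.mul_one, Matrix.mul_one]
  rw [show inc M a 0 * ((inc M a 0)ᵀ * A) = (inc M a 0 * (inc M a 0)ᵀ) * A by
      simp only [Matrix.mul_assoc],
    show inc M b a * ((inc M b a)ᵀ * A) = (inc M b a * (inc M b a)ᵀ) * A by
      simp only [Matrix.mul_assoc]]
  rw [← Matrix.add_mul, ← place_one_proj, ← place_one_proj, ← one_split h, Matrix.one_mul]

lemma col_split {M N a b : ℕ} (h : a + b = N) (A : Matrix (Fin M) (Fin N) ℂ) :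
    A = place 0 0 (ext 0 0 M a A) + place 0 a (ext 0 a M b A) := by
  unfold ext
  rw [place_eq, place_eq, inc_self]
  rw [Matrix.transpose_one, Matrix.one_mul, Matrix.one_mul, Matrix.one_mul]
  rw [Matrix.mul_assoc A, Matrix.mul_assoc A, ← Matrix.mul_add]
  conv_lhs => rw [← Matrix.mul_one A]
  congr 1
  rw [← place_one_proj, ← place_one_proj, ← one_split h]

lemma ext_ext {M N a1 b1 a2 b2 : ℕ} (r1 c1 r2 c2 : ℕ) (h1 : r2 + a2 ≤ a1) (h2 : c2 + b2 ≤ b1)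
    (A : Matrix (Fin M) (Fin N) ℂ) :
    ext r2 c2 a2 b2 (ext r1 c1 a1 b1 A) = ext (r1 + r2) (c1 + c2) a2 b2 A := by
  unfold ext
  rw [show (inc a1 a2 r2)ᵀ * ((inc M a1 r1)ᵀ * A * inc N b1 c1) * inc b1 b2 c2
      = (inc M a1 r1 * inc a1 a2 r2)ᵀ * A * (inc N b1 c1 * inc b1 b2 c2) by
    rw [Matrix.transpose_mul]
    simp only [Matrix.mul_assoc]]
  rw [inc_mul_inc r1 r2 h1, inc_mul_inc c1 c2 h2]

lemma four_split {M N a b c d : ℕ} (h1 : a + b = M) (h2 : c + d = N)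
    (A : Matrix (Fin M) (Fin N) ℂ) :
    A = place 0 0 (ext 0 0 a c A) + place 0 c (ext 0 c a d A)
        + place a 0 (ext a 0 b c A) + place a c (ext a c b d A) := by
  nth_rewrite 1 [row_split h1 A]
  nth_rewrite 1 [col_split h2 (ext 0 0 a N A)]
  nth_rewrite 1 [col_split h2 (ext a 0 b N A)]
  rw [place_add, place_add,
    place_place 0 0 0 0 (by omega) (by omega), place_place 0 0 0 c (by omega) (by omega),
    place_place a 0 0 0 (by omega) (by omega), place_place a 0 0 c (by omega) (by omega),
    ext_ext 0 0 0 0 (by omega) (by omega), ext_ext 0 0 0 c (by omega) (by omega),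
    ext_ext a 0 0 0 (by omega) (by omega), ext_ext a 0 0 c (by omega) (by omega)]
  simp only [Nat.add_zero, Nat.zero_add]
  abel

lemma abs_place_le {M N a b : ℕ} (r c : ℕ) (A : Matrix (Fin a) (Fin b) ℂ) {K : ℝ}
    (hK : 0 ≤ K) (h : ∀ i j, Norm.norm (A i j) ≤ K) (i : Fin M) (j : Fin N) :
    Norm.norm ((place r c A : Matrix (Fin M) (Fin N) ℂ) i j) ≤ K := by
  simp only [place]
  split_ifs
  · apply h
  · simpa using hK
  · simpa using hK

lemma sub_entry {m n k l : ℕ} (R : Matrix (Fin m) (Fin k) ℂ) (S : Matrix (Fin l) (Fin n) ℂ)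
    (X X' : Matrix (Fin k) (Fin l) ℂ) (i : Fin m) (j : Fin n) :
    (R * X * S) i j - (R * X' * S) i j = (R * (X - X') * S) i j := by
  rw [Matrix.mul_sub, Matrix.sub_mul, Matrix.sub_apply]

lemma close_mul {m n k l : ℕ} (R : Matrix (Fin m) (Fin k) ℂ) (S : Matrix (Fin l) (Fin n) ℂ)
    {ε : ℝ} (hε : 0 < ε) :
    ∃ δ : ℝ, 0 < δ ∧ ∀ (X X' : Matrix (Fin k) (Fin l) ℂ),
      (∀ i j, Norm.norm (X i j - X' i j) < δ) →
      ∀ i j, Norm.norm ((R * X * S) i j - (R * X' * S) i j) < ε := by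
  classical
  set SR : ℝ := ∑ i : Fin m, ∑ p : Fin k, Norm.norm (R i p) with hSR
  set SS : ℝ := ∑ j : Fin n, ∑ q : Fin l, Norm.norm (S q j) with hSS
  have hSRnn : 0 ≤ SR := Finset.sum_nonneg fun _ _ =>
    Finset.sum_nonneg fun _ _ => norm_nonneg _
  have hSSnn : 0 ≤ SS := Finset.sum_nonneg fun _ _ =>
    Finset.sum_nonneg fun _ _ => norm_nonneg _
  set KR : ℝ := SR + 1 with hKR
  set KS : ℝ := SS + 1 with hKS
  have hKRpos : 0 < KR := by linarith
  have hKSpos : 0 < KS := by linarith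
  refine ⟨ε / (2 * KR * KS), by positivity, ?_⟩
  intro X X' hX i j
  rw [sub_entry]
  set δ : ℝ := ε / (2 * KR * KS) with hδ
  have hδpos : (0:ℝ) < δ := by positivity
  have hrow : ∑ p : Fin k, Norm.norm (R i p) ≤ SR := by
    apply Finset.single_le_sum (f := fun i' : Fin m => ∑ p : Fin k, Norm.norm (R i' p))
    · intro _ _
      exact Finset.sum_nonneg fun _ _ => norm_nonneg _
    · exact Finset.mem_univ i
  have hcol : ∑ q : Fin l, Norm.norm (S q j) ≤ SS := by
    apply Finset.single_le_sum (f := fun j' : Fin n => ∑ q : Fin l, Norm.norm (S q j'))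
    · intro _ _
      exact Finset.sum_nonneg fun _ _ => norm_nonneg _
    · exact Finset.mem_univ j
  have hmid : ∀ q : Fin l, Norm.norm ((R * (X - X')) i q) ≤ δ * SR := by
    intro q
    rw [Matrix.mul_apply]
    calc Norm.norm (∑ p : Fin k, R i p * (X - X') p q)
        ≤ ∑ p : Fin k, Norm.norm (R i p * (X - X') p q) := norm_sum_le _ _
      _ = ∑ p : Fin k, Norm.norm (R i p) * Norm.norm ((X - X') p q) := by
          simp [_root_.map_mul]
      _ ≤ ∑ p : Fin k, Norm.norm (R i p) * δ := by
          apply Finset.sum_le_sum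
          intro p _
          apply mul_le_mul_of_nonneg_left _ (norm_nonneg _)
          rw [Matrix.sub_apply]
          exact le_of_lt (hX p q)
      _ = (∑ p : Fin k, Norm.norm (R i p)) * δ := by rw [← Finset.sum_mul]
      _ ≤ SR * δ := mul_le_mul_of_nonneg_right hrow (le_of_lt hδpos)
      _ = δ * SR := by ring
  calc Norm.norm ((R * (X - X') * S) i j)
      = Norm.norm (∑ q : Fin l, (R * (X - X')) i q * S q j) := by rw [Matrix.mul_apply]
    _ ≤ ∑ q : Fin l, Norm.norm ((R * (X - X')) i q * S q j) := norm_sum_le _ _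
    _ = ∑ q : Fin l, Norm.norm ((R * (X - X')) i q) * Norm.norm (S q j) := by
        simp [_root_.map_mul]
    _ ≤ ∑ q : Fin l, (δ * SR) * Norm.norm (S q j) := by
        apply Finset.sum_le_sum
        intro q _
        exact mul_le_mul_of_nonneg_right (hmid q) (norm_nonneg _)
    _ = (δ * SR) * ∑ q : Fin l, Norm.norm (S q j) := by rw [← Finset.mul_sum]
    _ ≤ (δ * SR) * SS := by
        apply mul_le_mul_of_nonneg_left hcol
        positivity
    _ ≤ (δ * KR) * KS := by
        apply mul_le_mul
        · apply mul_le_mul_of_nonneg_left _ (le_of_lt hδpos)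
          simp [hKR]
        · simp [hKS]
        · exact hSSnn
        · positivity
    _ = ε / 2 := by
        rw [hδ]
        field_simp
    _ < ε := by linarith

lemma unit_perturb {k : ℕ} (Q : Matrix (Fin k) (Fin k) ℂ) {ε : ℝ} (hε : 0 < ε) :
    ∃ t : ℂ, Norm.norm t < ε ∧ IsUnit (Q + t • (1 : Matrix (Fin k) (Fin k) ℂ)) := by
  classical
  set p : Polynomial ℂ := Matrix.charpoly (-Q) with hp0
  have hp : p ≠ 0 := (Matrix.charpoly_monic (-Q)).ne_zero
  have hroots : {x : ℂ | p.IsRoot x}.Finite := Polynomial.finite_setOf_isRoot hp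
  have hIoo : (Set.Ioo (0:ℝ) ε).Infinite := Set.Ioo_infinite hε
  have himg : ((fun x : ℝ => (x : ℂ)) '' (Set.Ioo 0 ε)).Infinite :=
    hIoo.image (Function.Injective.injOn Complex.ofReal_injective)
  obtain ⟨t, ht⟩ := (himg.diff hroots).nonempty
  obtain ⟨⟨x, hx, rfl⟩, hnr⟩ := ht
  refine ⟨(x : ℂ), ?_, ?_⟩
  · rw [Complex.norm_real, Real.norm_eq_abs, abs_of_pos hx.1]
    exact hx.2
  · have hdet : Polynomial.eval ((x:ℂ)) p ≠ 0 := fun hh => hnr hh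
    have hev : Polynomial.eval ((x:ℂ)) p
        = (Q + ((x:ℂ)) • (1 : Matrix (Fin k) (Fin k) ℂ)).det := by
      rw [hp0, Matrix.charpoly]
      rw [← Polynomial.coe_evalRingHom, RingHom.map_det]
      congr 1
      funext a b
      by_cases hab : a = b
      · subst hab
        simp [Matrix.map_apply, Matrix.charmatrix_apply_eq, Matrix.add_apply,
          Matrix.smul_apply, Matrix.one_apply]
        ring
      · simp [Matrix.map_apply, Matrix.charmatrix_apply_ne _ _ _ hab, Matrix.add_apply,
          Matrix.smul_apply, Matrix.one_apply, hab]
    apply (Matrix.isUnit_iff_isUnit_det _).mpr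
    rw [← hev]
    exact isUnit_iff_ne_zero.mpr hdet

lemma abs_place_lt {M N a b : ℕ} (r c : ℕ) (A : Matrix (Fin a) (Fin b) ℂ) {δ : ℝ}
    (hδ : 0 < δ) (h : ∀ i j, Norm.norm (A i j) < δ) (i : Fin M) (j : Fin N) :
    Norm.norm ((place r c A : Matrix (Fin M) (Fin N) ℂ) i j) < δ := by
  simp only [place]
  split_ifs
  · apply h
  · simpa using hδ
  · simpa using hδ

lemma perturb_close {M N a : ℕ} (r c : ℕ) (C : Matrix (Fin M) (Fin N) ℂ) {t : ℂ} {ε : ℝ}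
    (h : Norm.norm t < ε) (i : Fin M) (j : Fin N) :
    Norm.norm (C i j
      - (C + t • (place r c (1 : Matrix (Fin a) (Fin a) ℂ) : Matrix (Fin M) (Fin N) ℂ)) i j)
      < ε := by
  have hpos : 0 < ε := lt_of_le_of_lt (norm_nonneg _) h
  have h1 : C i j
      - (C + t • (place r c (1 : Matrix (Fin a) (Fin a) ℂ) : Matrix (Fin M) (Fin N) ℂ)) i j
      = -(t * (place r c (1 : Matrix (Fin a) (Fin a) ℂ) : Matrix (Fin M) (Fin N) ℂ) i j) := by
    simp [Matrix.add_apply, Matrix.smul_apply]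
  rw [h1, norm_neg, norm_mul]
  have h2 : Norm.norm ((place r c (1 : Matrix (Fin a) (Fin a) ℂ) : Matrix (Fin M) (Fin N) ℂ) i j) ≤ 1 := by
    apply abs_place_le _ _ _ zero_le_one
    intro i' j'
    rw [Matrix.one_apply]
    split_ifs <;> simp
  calc Norm.norm t * Norm.norm ((place r c (1 : Matrix (Fin a) (Fin a) ℂ) : Matrix (Fin M) (Fin N) ℂ) i j)
      ≤ Norm.norm t * 1 := by
        exact mul_le_mul_of_nonneg_left h2 (norm_nonneg _)
    _ = Norm.norm t := mul_one _
    _ < ε := h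

lemma place_neg {M N a b : ℕ} (r c : ℕ) (A : Matrix (Fin a) (Fin b) ℂ) :
    (place r c (-A) : Matrix (Fin M) (Fin N) ℂ) = -place r c A := by
  rw [place_eq, place_eq, Matrix.mul_neg, Matrix.neg_mul]

/-- Key induction: pinned density lemma. -/
lemma pinned : ∀ n m : ℕ, n < m → ∀ (C : Matrix (Fin m) (Fin n) ℂ) (ε : ℝ), 0 < ε →
    ∃ C' : Matrix (Fin m) (Fin n) ℂ,
      (∀ i j, Norm.norm (C i j - C' i j) < ε) ∧
      PairEquiv (place 0 0 (1 : Matrix (Fin n) (Fin n) ℂ)) C'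
        (place 0 0 (1 : Matrix (Fin n) (Fin n) ℂ))
        (place (m - n) 0 (1 : Matrix (Fin n) (Fin n) ℂ)) := by
  intro n
  induction n using Nat.strong_induction_on with
  | _ n IH =>
    intro m hmn C ε hε
    by_cases hnd : n ≤ m - n
    · -- easy case : m ≥ 2n
      obtain ⟨t, ht, hQ0⟩ := unit_perturb (ext n 0 n n C) hε
      refine ⟨C + t • place n 0 (1 : Matrix (Fin n) (Fin n) ℂ),
        fun i j => perturb_close _ _ _ ht i j, ?_⟩
      set d := m - n with hd
      set C' : Matrix (Fin m) (Fin n) ℂ := C + t • place n 0 (1 : Matrix (Fin n) (Fin n) ℂ)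
        with hC'
      have hQ' : IsUnit (ext n 0 n n C') := by
        have h1 : ext n 0 n n C' = ext n 0 n n C + t • (1 : Matrix (Fin n) (Fin n) ℂ) := by
          rw [hC', ext_add, ext_smul, ext_place_same n 0 (by omega) (by omega)]
        rw [h1]; exact hQ0
      set Q' := ext n 0 n n C' with hQdef
      have hdet : IsUnit Q'.det := (Matrix.isUnit_iff_isUnit_det _).mp hQ'
      set Qi := Q'⁻¹ with hQidef
      have hQi1 : Q' * Qi = 1 := Matrix.mul_nonsing_inv _ hdet
      have hQi2 : Qi * Q' = 1 := Matrix.nonsing_inv_mul _ hdet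
      set C₁ := ext 0 0 n n C' with hC1
      set C₃ := ext (n + n) 0 (d - n) n C' with hC3
      have hsplit : C' = place 0 0 C₁ + place n 0 Q' + place (n + n) 0 C₃ := by
        have h1 := row_split (show n + d = m by omega) C'
        have h2 := row_split (show n + (d - n) = d by omega) (ext n 0 d n C')
        rw [h2, place_add, place_place n 0 0 0 (by omega) (by omega),
          place_place n 0 n 0 (by omega) (by omega),
          ext_ext n 0 0 0 (by omega) (by omega), ext_ext n 0 n 0 (by omega) (by omega)] at h1
        simp only [Nat.add_zero, Nat.zero_add] at h1
        rw [← add_assoc] at h1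
        exact h1
      set Mb : Matrix (Fin m) (Fin m) ℂ :=
        place 0 0 (1 : Matrix (Fin n) (Fin n) ℂ)
        + place (n + n) n (1 : Matrix (Fin (d - n)) (Fin (d - n)) ℂ)
        + place 0 d C' with hMb
      set Mi : Matrix (Fin m) (Fin m) ℂ :=
        place 0 0 (1 : Matrix (Fin n) (Fin n) ℂ)
        + place 0 n (-(C₁ * Qi)) + place n n (-(C₃ * Qi))
        + place n (n + n) (1 : Matrix (Fin (d - n)) (Fin (d - n)) ℂ)
        + place d n Qi with hMi
      have hpdC : (place 0 d C' : Matrix (Fin m) (Fin m) ℂ)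
          = place 0 d C₁ + place n d Q' + place (n + n) d C₃ := by
        rw [hsplit, place_add, place_add,
          place_place 0 d 0 0 (by omega) (by omega),
          place_place 0 d n 0 (by omega) (by omega),
          place_place 0 d (n + n) 0 (by omega) (by omega)]
        simp only [Nat.add_zero, Nat.zero_add]
      have hMM : Mi * Mb = 1 := by
        rw [hMi, hMb, hpdC]
        simp only [Matrix.mul_add, Matrix.add_mul]
        simp (disch := omega) only [place_mul_place, place_mul_place_disjoint,
          Matrix.mul_one, Matrix.one_mul, add_zero, zero_add, Matrix.neg_mul,
          Matrix.mul_assoc, hQi2, Matrix.mul_zero, Matrix.zero_mul, place_neg]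
        have hone := one_split3 (M := m) (a := n) (b := d - n) (c := n) (by omega)
        rw [show n + (d - n) = d from by omega] at hone
        rw [hone]
        abel
      have hMM2 : Mb * Mi = 1 := mul_eq_one_comm.mp hMM
      have hMP1 : Mb * (place 0 0 (1 : Matrix (Fin n) (Fin n) ℂ) : Matrix (Fin m) (Fin n) ℂ)
          = place 0 0 (1 : Matrix (Fin n) (Fin n) ℂ) := by
        rw [hMb]
        simp only [Matrix.add_mul]
        simp (disch := omega) only [place_mul_place, place_mul_place_disjoint,
          Matrix.mul_one, Matrix.one_mul, add_zero, zero_add]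
      have hMP2 : Mb * (place d 0 (1 : Matrix (Fin n) (Fin n) ℂ) : Matrix (Fin m) (Fin n) ℂ)
          = C' := by
        rw [hMb]
        simp only [Matrix.add_mul]
        simp (disch := omega) only [place_mul_place, place_mul_place_disjoint,
          Matrix.mul_one, Matrix.one_mul, add_zero, zero_add]
        exact place_full C'
      refine ⟨Mi, 1, IsUnit.of_mul_eq_one _ hMM, isUnit_one, ?_, ?_⟩
      · rw [Matrix.mul_one]
        have h : Mi * (Mb * (place 0 0 (1 : Matrix (Fin n) (Fin n) ℂ) : Matrix (Fin m) (Fin n) ℂ))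
            = Mi * place 0 0 (1 : Matrix (Fin n) (Fin n) ℂ) := by rw [hMP1]; rfl
        rw [← Matrix.mul_assoc, hMM, Matrix.one_mul] at h
        exact h
      · rw [Matrix.mul_one]
        have h : Mi * (Mb * (place d 0 (1 : Matrix (Fin n) (Fin n) ℂ) : Matrix (Fin m) (Fin n) ℂ))
            = Mi * C' := by rw [hMP2]
        rw [← Matrix.mul_assoc, hMM, Matrix.one_mul] at h
        exact h
    · -- hard case : d < n
      set d := m - n with hd
      have hdn : d < n := by omega
      set e := n - d with he
      have hde : d + e = n := by omega
      have hed : e + d = n := by omega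
      -- step 1: perturb bottom-left d×d corner
      obtain ⟨t, ht, hQ0⟩ := unit_perturb (ext n 0 d d C) (half_pos hε)
      set C1 : Matrix (Fin m) (Fin n) ℂ := C + t • place n 0 (1 : Matrix (Fin d) (Fin d) ℂ)
        with hC1
      have hclose1 : ∀ i j, Norm.norm (C i j - C1 i j) < ε / 2 :=
        fun i j => perturb_close _ _ _ ht i j
      -- step 2: blocks
      set Nn : Matrix (Fin n) (Fin n) ℂ := ext 0 0 n n C1 with hNn
      set D : Matrix (Fin d) (Fin n) ℂ := ext n 0 d n C1 with hDdef
      have hrow : C1 = place 0 0 Nn + place n 0 D := row_split (by omega) C1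
      set Q' : Matrix (Fin d) (Fin d) ℂ := ext 0 0 d d D with hQ'def
      have hQQ : Q' = ext n 0 d d C + t • (1 : Matrix (Fin d) (Fin d) ℂ) := by
        rw [hQ'def, hDdef, ext_ext n 0 0 0 (by omega) (by omega)]
        simp only [Nat.add_zero, Nat.zero_add]
        rw [hC1, ext_add, ext_smul, ext_place_same n 0 (by omega) (by omega)]
      have hQu : IsUnit Q' := by rw [hQQ]; exact hQ0
      have hdetQ : IsUnit Q'.det := (Matrix.isUnit_iff_isUnit_det _).mp hQu
      set Qi := Q'⁻¹ with hQi
      have hQi1 : Q' * Qi = 1 := Matrix.mul_nonsing_inv _ hdetQ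
      have hQi2 : Qi * Q' = 1 := Matrix.nonsing_inv_mul _ hdetQ
      set Cr : Matrix (Fin d) (Fin e) ℂ := ext 0 d d e D with hCrdef
      have hDsplit : D = place 0 0 Q' + place 0 d Cr := col_split (by omega) D
      -- step 3: Y and its inverse Yi
      set Ya : Matrix (Fin d) (Fin n) ℂ :=
        Qi * ((place 0 e (1 : Matrix (Fin d) (Fin d) ℂ) : Matrix (Fin d) (Fin n) ℂ)
          - place 0 0 Cr) with hYa
      set Y : Matrix (Fin n) (Fin n) ℂ :=
        place 0 0 Ya + place d 0 (1 : Matrix (Fin e) (Fin e) ℂ) with hY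
      set Yi : Matrix (Fin n) (Fin n) ℂ :=
        place 0 d (1 : Matrix (Fin e) (Fin e) ℂ) + place e 0 D with hYidef
      have hQYa : Q' * Ya
          = (place 0 e (1 : Matrix (Fin d) (Fin d) ℂ) : Matrix (Fin d) (Fin n) ℂ)
            - place 0 0 Cr := by
        rw [hYa, ← Matrix.mul_assoc, hQi1, Matrix.one_mul]
      have hYiD : (place e 0 D : Matrix (Fin n) (Fin n) ℂ)
          = place e 0 Q' + place e d Cr := by
        rw [hDsplit, place_add, place_place e 0 0 0 (by omega) (by omega),
          place_place e 0 0 d (by omega) (by omega)]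
        simp only [Nat.add_zero, Nat.zero_add]
      have hYiY : Yi * Y = 1 := by
        rw [hYidef, hY, hYiD]
        simp only [Matrix.mul_add, Matrix.add_mul]
        simp (disch := omega) only [place_mul_place, place_mul_place_disjoint,
          Matrix.mul_one, Matrix.one_mul, add_zero, zero_add,
          Matrix.mul_zero, Matrix.zero_mul]
        rw [hQYa, place_sub, place_place e 0 0 e (by omega) (by omega),
          place_place e 0 0 0 (by omega) (by omega)]
        simp only [Nat.add_zero, Nat.zero_add]
        rw [one_split (a := e) (b := d) (M := n) (by omega)]
        abel
      have hYYi : Y * Yi = 1 := mul_eq_one_comm.mp hYiY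
      have hYu : IsUnit Y := IsUnit.of_mul_eq_one _ hYYi
      -- D * Y = place 0 e 1
      have hselYi : (place 0 e (1 : Matrix (Fin d) (Fin d) ℂ) : Matrix (Fin d) (Fin n) ℂ) * Yi
          = D := by
        rw [hYidef, hYiD]
        simp only [Matrix.mul_add]
        simp (disch := omega) only [place_mul_place, place_mul_place_disjoint,
          Matrix.mul_one, Matrix.one_mul, add_zero, zero_add]
        exact hDsplit.symm
      have hDY : D * Y = (place 0 e (1 : Matrix (Fin d) (Fin d) ℂ) : Matrix (Fin d) (Fin n) ℂ) := by
        conv_lhs => rw [← hselYi]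
        rw [Matrix.mul_assoc, hYiY, Matrix.mul_one]
      -- step 4 : R1 and its inverse
      set R1 : Matrix (Fin m) (Fin m) ℂ :=
        place 0 0 Yi + place n n (1 : Matrix (Fin d) (Fin d) ℂ) with hR1def
      set R1i : Matrix (Fin m) (Fin m) ℂ :=
        place 0 0 Y + place n n (1 : Matrix (Fin d) (Fin d) ℂ) with hR1idef
      have hR1a : R1 * R1i = 1 := by
        rw [hR1def, hR1idef]
        simp only [Matrix.mul_add, Matrix.add_mul]
        simp (disch := omega) only [place_mul_place, place_mul_place_disjoint,
          Matrix.mul_one, Matrix.one_mul, add_zero, zero_add]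
        rw [hYiY, one_split (a := n) (b := d) (M := m) (by omega)]
      have hR1b : R1i * R1 = 1 := mul_eq_one_comm.mp hR1a
      -- transformed pair
      set Nt : Matrix (Fin n) (Fin n) ℂ := Yi * Nn * Y with hNt
      set X : Matrix (Fin m) (Fin n) ℂ :=
        place 0 0 Nt + place n e (1 : Matrix (Fin d) (Fin d) ℂ) with hX
      have hP1trans : R1 * (place 0 0 (1 : Matrix (Fin n) (Fin n) ℂ) : Matrix (Fin m) (Fin n) ℂ)
          * Y = (place 0 0 (1 : Matrix (Fin n) (Fin n) ℂ) : Matrix (Fin m) (Fin n) ℂ) := by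
        have h1 : R1 * (place 0 0 (1 : Matrix (Fin n) (Fin n) ℂ) : Matrix (Fin m) (Fin n) ℂ)
            = place 0 0 Yi := by
          rw [hR1def]
          simp only [Matrix.add_mul]
          simp (disch := omega) only [place_mul_place, place_mul_place_disjoint,
            Matrix.mul_one, Matrix.one_mul, add_zero, zero_add]
        rw [h1, place_row_mul, hYiY]
      have hC1trans : R1 * C1 * Y = X := by
        have h1 : R1 * C1 = place 0 0 (Yi * Nn) + place n 0 D := by
          rw [hR1def, hrow]
          simp only [Matrix.mul_add, Matrix.add_mul]
          simp (disch := omega) only [place_mul_place, place_mul_place_disjoint,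
            Matrix.mul_one, Matrix.one_mul, add_zero, zero_add]
        rw [h1, Matrix.add_mul, place_row_mul, place_row_mul, hDY,
          place_place n 0 0 e (by omega) (by omega)]
        rw [hX, hNt]
        simp only [Nat.add_zero, Nat.zero_add, Matrix.mul_assoc]
      -- step 5 : apply the induction hypothesis
      set N1 : Matrix (Fin n) (Fin e) ℂ := ext 0 0 n e Nt with hN1
      set N2 : Matrix (Fin n) (Fin d) ℂ := ext 0 e n d Nt with hN2
      have hNsplit : Nt = place 0 0 N1 + place 0 e N2 := col_split (by omega) Nt
      obtain ⟨δ, hδpos, hδ⟩ := close_mul R1i Yi (half_pos hε)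
      obtain ⟨N1', hN1c, hpe⟩ := IH e (by omega) n (by omega) N1 δ hδpos
      rw [show n - e = d from by omega] at hpe
      obtain ⟨R', S', hR'u, hS'u, hpe1, hpe2⟩ := hpe
      have hdetS' : IsUnit S'.det := (Matrix.isUnit_iff_isUnit_det _).mp hS'u
      set S'i := S'⁻¹ with hS'i
      have hS'1 : S' * S'i = 1 := Matrix.mul_nonsing_inv _ hdetS'
      have hS'2 : S'i * S' = 1 := Matrix.nonsing_inv_mul _ hdetS'
      have hW1 : R' * (place 0 0 (1 : Matrix (Fin e) (Fin e) ℂ) : Matrix (Fin n) (Fin e) ℂ)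
          = place 0 0 S'i := by
        have h1 : (place 0 0 (1 : Matrix (Fin e) (Fin e) ℂ) : Matrix (Fin n) (Fin e) ℂ) * S'i
            = R' * (place 0 0 (1 : Matrix (Fin e) (Fin e) ℂ) : Matrix (Fin n) (Fin e) ℂ)
              * S' * S'i := by rw [← hpe1]
        rw [Matrix.mul_assoc
            (R' * (place 0 0 (1 : Matrix (Fin e) (Fin e) ℂ) : Matrix (Fin n) (Fin e) ℂ)),
          hS'1, Matrix.mul_one, place_row_mul, Matrix.one_mul] at h1
        exact h1.symm
      have hW2 : R' * N1' = place d 0 S'i := by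
        have h1 : (place d 0 (1 : Matrix (Fin e) (Fin e) ℂ) : Matrix (Fin n) (Fin e) ℂ) * S'i
            = R' * N1' * S' * S'i := by rw [← hpe2]
        rw [Matrix.mul_assoc (R' * N1'), hS'1, Matrix.mul_one, place_row_mul,
          Matrix.one_mul] at h1
        exact h1.symm
      -- step 6 : blocks of R'
      have hR'4 := four_split (show e + d = n by omega) (show e + d = n by omega) R'
      set A11 := ext 0 0 e e R' with hA11d
      set A12 := ext 0 e e d R' with hA12d
      set A21 := ext e 0 d e R' with hA21d
      set A22 := ext e e d d R' with hA22d
      have hLW1 : (place 0 0 A11 : Matrix (Fin n) (Fin e) ℂ) + place e 0 A21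
          = place 0 0 S'i := by
        rw [← hW1]
        conv_rhs => rw [hR'4]
        simp only [Matrix.add_mul]
        simp (disch := omega) only [place_mul_place, place_mul_place_disjoint,
          Matrix.mul_one, Matrix.one_mul, add_zero, zero_add]
      have hA11S : A11 = S'i := by
        have h1 := congrArg (ext 0 0 e e) hLW1
        simp (disch := omega) only [ext_add, ext_place_same, ext_place_row_disjoint,
          add_zero, zero_add] at h1
        exact h1
      have hA21z : A21 = 0 := by
        have h1 := congrArg (ext e 0 d e) hLW1
        simp (disch := omega) only [ext_add, ext_place_same, ext_place_row_disjoint,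
          add_zero, zero_add] at h1
        exact h1
      have hdetR' : IsUnit R'.det := (Matrix.isUnit_iff_isUnit_det _).mp hR'u
      set R'i := R'⁻¹ with hR'idef
      have hR'1 : R' * R'i = 1 := Matrix.mul_nonsing_inv _ hdetR'
      have hR'2 : R'i * R' = 1 := Matrix.nonsing_inv_mul _ hdetR'
      have hR'i4 := four_split (show e + d = n by omega) (show e + d = n by omega) R'i
      set B12 := ext 0 e e d R'i with hB12d
      set B22 := ext e e d d R'i with hB22d
      have hZ1 : A22 * B22 = 1 := by
        have hprod := hR'1
        nth_rewrite 1 [hR'4] at hprod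
        nth_rewrite 1 [hR'i4] at hprod
        rw [hA21z, place_zero, add_zero] at hprod
        rw [one_split (a := e) (b := d) (M := n) (by omega)] at hprod
        simp only [Matrix.mul_add, Matrix.add_mul] at hprod
        simp (disch := omega) only [place_mul_place, place_mul_place_disjoint,
          Matrix.mul_one, Matrix.one_mul, add_zero, zero_add] at hprod
        have h1 := congrArg (ext e e d d) hprod
        simp (disch := omega) only [ext_add, ext_place_same, ext_place_row_disjoint,
          ext_place_col_disjoint, add_zero, zero_add] at h1
        exact h1
      have hZ2 : B22 * A22 = 1 := mul_eq_one_comm.mp hZ1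
      -- step 7 : the perturbed matrix
      set X' : Matrix (Fin m) (Fin n) ℂ :=
        place 0 0 N1' + place 0 e N2 + place n e (1 : Matrix (Fin d) (Fin d) ℂ) with hX'
      have hXsplit : X = place 0 0 N1 + place 0 e N2
          + place n e (1 : Matrix (Fin d) (Fin d) ℂ) := by
        rw [hX]
        nth_rewrite 1 [hNsplit]
        rw [place_add, place_place 0 0 0 0 (by omega) (by omega),
          place_place 0 0 0 e (by omega) (by omega)]
        simp only [Nat.add_zero, Nat.zero_add]
      set C' : Matrix (Fin m) (Fin n) ℂ := R1i * X' * Yi with hC'def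
      have hC1eq : C1 = R1i * X * Yi := by
        have h2 : R1i * (R1 * C1 * Y) * Yi = C1 := by
          simp only [Matrix.mul_assoc]
          rw [hYYi, Matrix.mul_one, ← Matrix.mul_assoc, hR1b, Matrix.one_mul]
        rw [hC1trans] at h2
        exact h2.symm
      have hXX' : ∀ i j, Norm.norm (X i j - X' i j) < δ := by
        have hsub : X - X' = place 0 0 (N1 - N1') := by
          rw [hXsplit, hX', place_sub]
          abel
        intro i j
        have h1 : X i j - X' i j = (X - X') i j := by rw [Matrix.sub_apply]
        rw [h1, hsub]
        apply abs_place_lt _ _ _ hδpos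
        intro i' j'
        rw [Matrix.sub_apply]
        exact hN1c i' j'
      have hclose2 : ∀ i j, Norm.norm (C1 i j - C' i j) < ε / 2 := by
        intro i j
        have h1 := hδ X X' hXX' i j
        rw [← hC1eq] at h1
        exact h1
      -- step 8 : W
      set V : Matrix (Fin n) (Fin d) ℂ := place d 0 A12 - R' * N2 with hV
      set Wb : Matrix (Fin m) (Fin m) ℂ :=
        place 0 0 R' + place 0 n V + place n n A22 with hWb
      set Wbi : Matrix (Fin m) (Fin m) ℂ :=
        place 0 0 R'i + place 0 n (-(R'i * (V * B22))) + place n n B22 with hWbi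
      have hv1 : R' * -(R'i * (V * B22)) = -(V * B22) := by
        rw [Matrix.mul_neg, ← Matrix.mul_assoc, hR'1, Matrix.one_mul]
      have hv2 : -(R'i * (V * B22)) * A22 = -(R'i * V) := by
        rw [Matrix.neg_mul, Matrix.mul_assoc, Matrix.mul_assoc, hZ2, Matrix.mul_one]
      have hWb1 : Wb * Wbi = 1 := by
        rw [hWb, hWbi]
        simp only [Matrix.mul_add, Matrix.add_mul]
        simp (disch := omega) only [place_mul_place, place_mul_place_disjoint,
          Matrix.mul_one, Matrix.one_mul, add_zero, zero_add]
        rw [hv1, hR'1, hZ1, place_neg, one_split (a := n) (b := d) (M := m) (by omega)]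
        abel
      have hWb2 : Wbi * Wb = 1 := by
        rw [hWb, hWbi]
        simp only [Matrix.mul_add, Matrix.add_mul]
        simp (disch := omega) only [place_mul_place, place_mul_place_disjoint,
          Matrix.mul_one, Matrix.one_mul, add_zero, zero_add]
        rw [hv2, hR'2, hZ2, place_neg, one_split (a := n) (b := d) (M := m) (by omega)]
        abel
      -- step 9 : the two key identities
      have hG1 : Wb * (place 0 0 (1 : Matrix (Fin n) (Fin n) ℂ) : Matrix (Fin m) (Fin n) ℂ)
          = (place 0 0 (1 : Matrix (Fin n) (Fin n) ℂ) : Matrix (Fin m) (Fin n) ℂ) * R' := by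
        rw [hWb, place_row_mul, Matrix.one_mul]
        simp only [Matrix.add_mul]
        simp (disch := omega) only [place_mul_place, place_mul_place_disjoint,
          Matrix.mul_one, Matrix.one_mul, add_zero, zero_add]
      have hG2 : Wb * X' = (place d 0 (1 : Matrix (Fin n) (Fin n) ℂ) : Matrix (Fin m) (Fin n) ℂ)
          * R' := by
        rw [hWb, hX', place_row_mul, Matrix.one_mul]
        simp only [Matrix.mul_add, Matrix.add_mul]
        simp (disch := omega) only [place_mul_place, place_mul_place_disjoint,
          Matrix.mul_one, Matrix.one_mul, add_zero, zero_add]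
        rw [hW2, place_place 0 0 d 0 (by omega) (by omega)]
        simp only [Nat.add_zero, Nat.zero_add]
        conv_rhs => rw [hR'4]
        rw [hA21z, hA11S, place_zero, add_zero, place_add, place_add,
          place_place d 0 0 0 (by omega) (by omega),
          place_place d 0 0 e (by omega) (by omega),
          place_place d 0 e e (by omega) (by omega)]
        simp only [Nat.add_zero, Nat.zero_add]
        rw [hde, hV, place_sub, place_place 0 e d 0 (by omega) (by omega)]
        simp only [Nat.add_zero, Nat.zero_add]
        abel
      -- step 10 : conclusion
      have hC'trans : R1 * C' * Y = X' := by
        rw [hC'def]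
        simp only [Matrix.mul_assoc]
        rw [hYiY, Matrix.mul_one, ← Matrix.mul_assoc, hR1a, Matrix.one_mul]
      refine ⟨C', fun i j => lt_of_le_of_lt
        (norm_sub_le_norm_sub_add_norm_sub (C i j) (C1 i j) (C' i j))
        (by linarith [hclose1 i j, hclose2 i j]), ?_⟩
      refine ⟨Wb * R1, Y * R'i,
        (IsUnit.of_mul_eq_one _ hWb1).mul (IsUnit.of_mul_eq_one _ hR1a),
        hYu.mul (IsUnit.of_mul_eq_one _ hR'2), ?_, ?_⟩
      · have hcalc : Wb * R1 * (place 0 0 (1 : Matrix (Fin n) (Fin n) ℂ) : Matrix (Fin m) (Fin n) ℂ)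
            * (Y * R'i)
            = Wb * (R1 * (place 0 0 (1 : Matrix (Fin n) (Fin n) ℂ) : Matrix (Fin m) (Fin n) ℂ) * Y)
              * R'i := by
          simp only [Matrix.mul_assoc]
        rw [hcalc, hP1trans, hG1, Matrix.mul_assoc, hR'1, Matrix.mul_one]
      · have hcalc : Wb * R1 * C' * (Y * R'i) = Wb * (R1 * C' * Y) * R'i := by
          simp only [Matrix.mul_assoc]
        rw [hcalc, hC'trans, hG2, Matrix.mul_assoc, hR'1, Matrix.mul_one]

end PencilAux

open PencilAux

theorem generic_pencil_tall (m n : ℕ) (hmn : m > n) (A B : Matrix (Fin m) (Fin n) ℂ)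
    (ε : ℝ) (hε : 0 < ε) :
    ∃ A' B' : Matrix (Fin m) (Fin n) ℂ,
      (∀ i j, ‖A i j - A' i j‖ < ε) ∧
      (∀ i j, ‖B i j - B' i j‖ < ε) ∧
      PairEquiv A' B'
        (place 0 0 (1 : Matrix (Fin n) (Fin n) ℂ))
        (place (m - n) 0 (1 : Matrix (Fin n) (Fin n) ℂ)) := by

  have hnm : n < m := hmn
  set d := m - n with hd
  obtain ⟨t, ht, hT0⟩ := unit_perturb (ext 0 0 n n A) hε
  set A' : Matrix (Fin m) (Fin n) ℂ := A + t • place 0 0 (1 : Matrix (Fin n) (Fin n) ℂ)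
    with hA'
  have hTu : IsUnit (ext 0 0 n n A') := by
    have h1 : ext 0 0 n n A' = ext 0 0 n n A + t • (1 : Matrix (Fin n) (Fin n) ℂ) := by
      rw [hA', ext_add, ext_smul, ext_place_same 0 0 (by omega) (by omega)]
    rw [h1]; exact hT0
  set T := ext 0 0 n n A' with hTdef
  have hdetT : IsUnit T.det := (Matrix.isUnit_iff_isUnit_det _).mp hTu
  set Ti := T⁻¹ with hTidef
  have hTi1 : T * Ti = 1 := Matrix.mul_nonsing_inv _ hdetT
  have hTi2 : Ti * T = 1 := Matrix.nonsing_inv_mul _ hdetT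
  set Ab := ext n 0 d n A' with hAb
  have hArow : A' = place 0 0 T + place n 0 Ab := row_split (by omega) A'
  set MA : Matrix (Fin m) (Fin m) ℂ :=
    place 0 0 T + place n 0 Ab + place n n (1 : Matrix (Fin d) (Fin d) ℂ) with hMA
  set MAi : Matrix (Fin m) (Fin m) ℂ :=
    place 0 0 Ti + place n 0 (-(Ab * Ti)) + place n n (1 : Matrix (Fin d) (Fin d) ℂ) with hMAi
  have hv : -(Ab * Ti) * T = -Ab := by
    rw [Matrix.neg_mul, Matrix.mul_assoc, hTi2, Matrix.mul_one]
  have hMA1 : MAi * MA = 1 := by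
    rw [hMA, hMAi]
    simp only [Matrix.mul_add, Matrix.add_mul]
    simp (disch := omega) only [place_mul_place, place_mul_place_disjoint,
      Matrix.mul_one, Matrix.one_mul, add_zero, zero_add]
    rw [hv, hTi2, place_neg, one_split (a := n) (b := d) (M := m) (by omega)]
    abel
  have hMA2 : MA * MAi = 1 := mul_eq_one_comm.mp hMA1
  have hRA : MAi * A' = (place 0 0 (1 : Matrix (Fin n) (Fin n) ℂ) : Matrix (Fin m) (Fin n) ℂ) := by
    rw [hMAi]
    nth_rewrite 1 [hArow]
    simp only [Matrix.mul_add, Matrix.add_mul]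
    simp (disch := omega) only [place_mul_place, place_mul_place_disjoint,
      Matrix.mul_one, Matrix.one_mul, add_zero, zero_add]
    rw [hv, hTi2, place_neg]
    abel
  obtain ⟨δ, hδpos, hδ⟩ := close_mul MA (1 : Matrix (Fin n) (Fin n) ℂ) hε
  obtain ⟨CB', hCBclose, hpe⟩ := pinned n m hnm (MAi * B) δ hδpos
  set B' := MA * CB' with hB'
  obtain ⟨R1, S1, hu1, hu2, he1, he2⟩ := hpe
  refine ⟨A', B', fun i j => perturb_close _ _ _ ht i j, ?_, ?_⟩
  · intro i j
    have h1 := hδ (MAi * B) CB' hCBclose i j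
    rw [Matrix.mul_one, Matrix.mul_one, ← Matrix.mul_assoc, hMA2, Matrix.one_mul] at h1
    exact h1
  · refine ⟨R1 * MAi, S1, hu1.mul (IsUnit.of_mul_eq_one _ hMA1), hu2, ?_, ?_⟩
    · rw [show R1 * MAi * A' * S1 = R1 * (MAi * A') * S1 from by simp only [Matrix.mul_assoc],
        hRA]
      exact he1
    · rw [hB', show R1 * MAi * (MA * CB') * S1 = R1 * (MAi * MA * CB') * S1 from by
        simp only [Matrix.mul_assoc], hMA1, Matrix.one_mul]
      exact he2
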